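/- Let Γ be a group and A a symmetric subset of Γ containing every element of finite order. Let a ∈ Γ be achiral (i.e. b a^m b⁻¹ = a^{-m} for some b ∈ Γ, m > 0). If every power of b² that arises has finite order (i.e. b² has finite order), then the stable word norm of a with respect to A is zero. -/

import Mathlib

/-- Let `A` be a symmetric subset of `Γ` containing every element of finite order,
and let `a` be achiral via `b` with `b²` of finite order. Then the stable word norm
of `a` with respect to `A` is zero: some positive power `a^q` lies in `⟨A⟩` and the
stable word norm of `a^q` vanishes. -/
theorem stmt4 {Γ : Type*} [Group Γ] (A : Set Γ)
    (hsymm : ∀ x ∈ A, x⁻¹ ∈ A)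
    (hfin : ∀ x : Γ, IsOfFinOrder x → x ∈ A)
    (a b : Γ) (m : ℕ) (hm : 0 < m)
    (h : b * a ^ m * b⁻¹ = (a ^ m)⁻¹)
    (hb2 : IsOfFinOrder (b ^ 2))
    (ν : Γ → ℕ)
    (hν : ∀ g, ν g = sInf {n | ∃ l : List Γ,
      (∀ x ∈ l, x ∈ A) ∧ l.prod = g ∧ l.length = n}) :
    ∃ q : ℕ, 0 < q ∧ a ^ q ∈ Subgroup.closure A ∧
      Filter.Tendsto (fun n : ℕ => (ν ((a ^ q) ^ n) : ℝ) / n) Filter.atTop (nhds 0) := by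
  -- b has finite order
  have hb : IsOfFinOrder b := hb2.of_pow (by norm_num)
  set d := orderOf (b ^ 2) with hd
  have hdpos : 0 < d := hb2.orderOf_pos
  -- b² commutes with a^m
  have hcomm : Commute (a ^ m) (b ^ 2) := by
    have h2 : b * (a ^ m)⁻¹ * b⁻¹ = a ^ m := by
      simpa [mul_inv_rev, mul_assoc] using congrArg (·⁻¹) h
    have key2 : b ^ 2 * a ^ m = a ^ m * b ^ 2 := by
      calc b ^ 2 * a ^ m = b * (b * a ^ m * b⁻¹) * b := by
            rw [pow_two]; group
        _ = b * (a ^ m)⁻¹ * b := by rw [h]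
        _ = (b * (a ^ m)⁻¹ * b⁻¹) * b ^ 2 := by rw [pow_two]; group
        _ = a ^ m * b ^ 2 := by rw [h2]
    exact (show Commute (b ^ 2) (a ^ m) from key2).symm
  -- conjugation identity for powers
  have hn : ∀ n : ℕ, b * (a ^ (m * n))⁻¹ * b⁻¹ = a ^ (m * n) := by
    intro n
    have h1 : b * a ^ (m * n) * b⁻¹ = (a ^ (m * n))⁻¹ := by
      calc b * a ^ (m * n) * b⁻¹ = (b * a ^ m * b⁻¹) ^ n := by
            rw [conj_pow, pow_mul]
        _ = ((a ^ m) ^ n)⁻¹ := by rw [h, inv_pow]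
        _ = (a ^ (m * n))⁻¹ := by rw [pow_mul]
    simpa [mul_inv_rev, mul_assoc] using congrArg (·⁻¹) h1
  -- key word: (x_n * b)^d = a^(2*m*n*d)
  have key : ∀ n : ℕ,
      ((a ^ (m * n) * b * (a ^ (m * n))⁻¹ * b) ^ d) = a ^ (2 * m * d * n) := by
    intro n
    have e1 : a ^ (m * n) * b * (a ^ (m * n))⁻¹ * b = a ^ (2 * (m * n)) * b ^ 2 := by
      calc a ^ (m * n) * b * (a ^ (m * n))⁻¹ * b
          = a ^ (m * n) * (b * (a ^ (m * n))⁻¹ * b⁻¹) * b ^ 2 := by group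
        _ = a ^ (m * n) * a ^ (m * n) * b ^ 2 := by rw [hn n]
        _ = a ^ (2 * (m * n)) * b ^ 2 := by rw [two_mul, pow_add]
    have hc2 : Commute (a ^ (2 * (m * n))) (b ^ 2) := by
      have : a ^ (2 * (m * n)) = (a ^ m) ^ (2 * n) := by
        rw [← pow_mul]; ring_nf
      rw [this]; exact hcomm.pow_left _
    rw [e1, hc2.mul_pow, pow_orderOf_eq_one, mul_one, ← pow_mul]
    congr 1; ring
  -- the basic word list
  set x : ℕ → Γ := fun n => a ^ (m * n) * b * (a ^ (m * n))⁻¹ with hx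
  have hxA : ∀ n, x n ∈ A := by
    intro n
    refine hfin _ ?_
    obtain ⟨k, hk, hbk⟩ := (isOfFinOrder_iff_pow_eq_one).mp hb
    exact (isOfFinOrder_iff_pow_eq_one).mpr ⟨k, hk, by
      simp [hx, conj_pow, hbk]⟩
  have hbA : b ∈ A := hfin b hb
  set l : ℕ → List Γ := fun n => (List.replicate d [x n, b]).flatten with hl
  have hlA : ∀ n, ∀ y ∈ l n, y ∈ A := by
    intro n y hy
    simp only [hl, List.mem_flatten, List.mem_replicate] at hy
    obtain ⟨L, hL, hyL⟩ := hy
    rw [hL.2] at hyL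
    simp only [List.mem_cons, List.not_mem_nil, or_false] at hyL
    rcases hyL with rfl | rfl
    exacts [hxA n, hbA]
  have hlprod : ∀ n, (l n).prod = a ^ (2 * m * d * n) := by
    intro n
    rw [hl]
    simp only [List.prod_flatten, List.map_replicate, List.prod_replicate]
    rw [show ([x n, b].prod) = x n * b by simp, ← key n, hx]
  have hllen : ∀ n, (l n).length = 2 * d := by
    intro n
    simp [hl, Nat.mul_comm]
  refine ⟨2 * m * d, by positivity, ?_, ?_⟩
  · -- a ^ q ∈ closure A
    have := hlprod 1
    rw [mul_one] at this
    rw [← this]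
    exact list_prod_mem (fun y hy => Subgroup.subset_closure (hlA 1 y hy))
  · -- tendsto
    have hbound : ∀ n : ℕ, ν ((a ^ (2 * m * d)) ^ n) ≤ 2 * d := by
      intro n
      rw [hν, ← pow_mul]
      exact Nat.sInf_le ⟨l n, hlA n, hlprod n, hllen n⟩
    have h0 : Filter.Tendsto (fun n : ℕ => ((2 * d : ℕ) : ℝ) / n) Filter.atTop (nhds 0) :=
      tendsto_const_div_atTop_nhds_zero_nat _
    refine squeeze_zero (fun n => by positivity) (fun n => ?_) h0
    gcongr
    exact_mod_cast hbound n
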